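/- arXiv:1209.4375 — 2 statements merged into one kernel-verified Lean document; each statement's English description precedes it below -/
import Mathlib

section
/- Let E be a directed graph, K a field, and z a nonzero element of the center Z(KE) of the path algebra. If u and v are vertices of E that are connected (in the underlying undirected graph of E), then zu ≠ 0 if and only if zv ≠ 0. -/
/-! Basic infrastructure: directed graphs and their path algebras.

The path algebra `KE` is realized as the non-unital subalgebra generated by the
(images of the) vertices and edges inside the unital algebra `PA K E`, which is the
quotient of the free algebra on vertices and edges by the usual path-algebra
relations (vertices are orthogonal idempotents acting as local units on edges).
Words of composable edges are exactly the paths, so `KE` has the paths as a basis. -/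

/-- A directed graph `E = (E⁰, E¹, s, r)`. -/
structure DirGraph : Type 1 where
  V : Type
  Edge : Type
  s : Edge → V
  r : Edge → V

/-- A (non-unital, possibly non-closed) subset `S` of an algebra is *prime* if it is nonzero
and `a S b = 0` implies `a = 0` or `b = 0` for `a, b ∈ S`. -/
def IsPrimeSet {A : Type} [NonUnitalNonAssocSemiring A] (S : Set A) : Prop :=
  (∃ a ∈ S, a ≠ 0) ∧ ∀ a ∈ S, ∀ b ∈ S, (∀ x ∈ S, a * x * b = 0) → a = 0 ∨ b = 0

/-- `J` is a two-sided ideal of the (possibly non-unital) subalgebra with carrier `S`. -/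
def IsIdealOf (K : Type) [Field K] {A : Type} [Ring A] [Algebra K A] (S J : Set A) : Prop :=
  J ⊆ S ∧ (0 : A) ∈ J ∧ (∀ x ∈ J, ∀ y ∈ J, x + y ∈ J) ∧
    (∀ k : K, ∀ x ∈ J, k • x ∈ J) ∧ (∀ a ∈ S, ∀ x ∈ J, a * x ∈ J ∧ x * a ∈ J)

namespace DirGraph

/-- Generators of the path algebra: vertices and edges. -/
abbrev Gen (E : DirGraph) : Type := E.V ⊕ E.Edge

variable (K : Type) [Field K] (E : DirGraph)

/-- The defining relations of the path algebra: vertices are orthogonal idempotents,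
`s(e)·e = e`, `e·r(e) = e`, and all other vertex-edge products vanish. -/
inductive PathRel : FreeAlgebra K E.Gen → FreeAlgebra K E.Gen → Prop
  | vv_eq (u : E.V) :
      PathRel (FreeAlgebra.ι K (Sum.inl u) * FreeAlgebra.ι K (Sum.inl u))
        (FreeAlgebra.ι K (Sum.inl u))
  | vv_ne (u v : E.V) : u ≠ v →
      PathRel (FreeAlgebra.ι K (Sum.inl u) * FreeAlgebra.ι K (Sum.inl v)) 0
  | ve_eq (e : E.Edge) :
      PathRel (FreeAlgebra.ι K (Sum.inl (E.s e)) * FreeAlgebra.ι K (Sum.inr e))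
        (FreeAlgebra.ι K (Sum.inr e))
  | ve_ne (u : E.V) (e : E.Edge) : E.s e ≠ u →
      PathRel (FreeAlgebra.ι K (Sum.inl u) * FreeAlgebra.ι K (Sum.inr e)) 0
  | ev_eq (e : E.Edge) :
      PathRel (FreeAlgebra.ι K (Sum.inr e) * FreeAlgebra.ι K (Sum.inl (E.r e)))
        (FreeAlgebra.ι K (Sum.inr e))
  | ev_ne (e : E.Edge) (u : E.V) : E.r e ≠ u →
      PathRel (FreeAlgebra.ι K (Sum.inr e) * FreeAlgebra.ι K (Sum.inl u)) 0

/-- The ambient unital algebra (the unitalization of the path algebra). -/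
abbrev PA : Type := RingQuot (E.PathRel K)

/-- The image of a vertex in the path algebra. -/
noncomputable def vtx (u : E.V) : E.PA K :=
  RingQuot.mkAlgHom K (E.PathRel K) (FreeAlgebra.ι K (Sum.inl u))

/-- The image of an edge in the path algebra. -/
noncomputable def edg (e : E.Edge) : E.PA K :=
  RingQuot.mkAlgHom K (E.PathRel K) (FreeAlgebra.ι K (Sum.inr e))

/-- The path algebra `KE`: the (non-unital) subalgebra spanned by all paths, i.e.
generated by the vertices and edges. -/
noncomputable def KE : NonUnitalSubalgebra K (E.PA K) :=
  NonUnitalAlgebra.adjoin K (Set.range (E.vtx K) ∪ Set.range (E.edg K))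

/-- The center `Z(KE)` of the path algebra. -/
def relCenter : Set (E.PA K) :=
  {z | z ∈ E.KE K ∧ ∀ a ∈ E.KE K, a * z = z * a}

/-- `E.IsPathFrom u v l` : the list of edges `l` is a path from `u` to `v`
(`l = []` is the trivial path at `u = v`). -/
def IsPathFrom : E.V → E.V → List E.Edge → Prop
  | u, v, [] => u = v
  | u, v, e :: l => E.s e = u ∧ IsPathFrom (E.r e) v l

/-- The element of the path algebra corresponding to the path starting at `u`
with list of edges `l` (for `l = []` this is the vertex `u` itself). -/
noncomputable def pathElem (u : E.V) (l : List E.Edge) : E.PA K :=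
  E.vtx K u * (l.map (E.edg K)).prod

/-- The sum of all vertices: the unit of `KE` when `E⁰` is finite. -/
noncomputable def unitKE : E.PA K := ∑ᶠ u : E.V, E.vtx K u

/-- The scalar multiples `K·1` of the unit of `KE`. -/
noncomputable def scalarSet : Set (E.PA K) := Set.range fun k : K => k • E.unitKE K

/-- One step in the underlying undirected graph. -/
def Step (u v : E.V) : Prop :=
  (∃ e : E.Edge, E.s e = u ∧ E.r e = v) ∨ (∃ e : E.Edge, E.s e = v ∧ E.r e = u)

/-- `u ∼ v` : the vertices `u` and `v` are connected in the underlying undirected graph. -/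
def Connected (u v : E.V) : Prop := Relation.ReflTransGen E.Step u v

/-- The graph `E` is connected. -/
def IsConnectedGraph : Prop := ∀ u v : E.V, E.Connected u v

/-- The graph `E` is a cycle: `n ≥ 1` vertices `u₁, …, uₙ` and `n` edges `f₁, …, fₙ` with
`s(fᵢ) = uᵢ`, `r(fᵢ) = uᵢ₊₁` (indices mod `n`). -/
def IsCycleGraph : Prop :=
  ∃ n : ℕ, ∃ hn : 0 < n, ∃ (hv : Fin n ≃ E.V) (he : Fin n ≃ E.Edge),
    ∀ i : Fin n, E.s (he i) = hv i ∧ E.r (he i) = hv ⟨(i.1 + 1) % n, Nat.mod_lt _ hn⟩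

end DirGraph

namespace DirGraph

variable {K : Type} [Field K] {E : DirGraph}

open scoped Classical

/-! ### Basic multiplication relations in the path algebra -/

lemma vtx_mul_vtx (u v : E.V) :
    E.vtx K u * E.vtx K v = if v = u then E.vtx K u else 0 := by
  split_ifs with h
  · subst h
    unfold vtx
    rw [← map_mul]
    exact RingQuot.mkAlgHom_rel K (PathRel.vv_eq _)
  · unfold vtx
    rw [← map_mul, RingQuot.mkAlgHom_rel K (PathRel.vv_ne u v fun hh => h hh.symm), map_zero]

lemma vtx_mul_edg (u : E.V) (e : E.Edge) :
    E.vtx K u * E.edg K e = if E.s e = u then E.edg K e else 0 := by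
  split_ifs with h
  · subst h
    unfold vtx edg
    rw [← map_mul]
    exact RingQuot.mkAlgHom_rel K (PathRel.ve_eq e)
  · unfold vtx edg
    rw [← map_mul, RingQuot.mkAlgHom_rel K (PathRel.ve_ne u e h), map_zero]

lemma edg_mul_vtx (e : E.Edge) (u : E.V) :
    E.edg K e * E.vtx K u = if u = E.r e then E.edg K e else 0 := by
  split_ifs with h
  · subst h
    unfold vtx edg
    rw [← map_mul]
    exact RingQuot.mkAlgHom_rel K (PathRel.ev_eq e)
  · unfold vtx edg
    rw [← map_mul, RingQuot.mkAlgHom_rel K (PathRel.ev_ne e u fun hh => h hh.symm), map_zero]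

/-! ### End vertex of a (formal) path -/

/-- The end vertex of a formal path `(w, l)` : `w` if `l = []`, `r` of the last edge otherwise. -/
def endV (E : DirGraph) (w : E.V) (l : List E.Edge) : E.V :=
  l.foldl (fun _ e => E.r e) w

@[simp] lemma endV_nil (w : E.V) : E.endV w [] = w := rfl

@[simp] lemma endV_cons (w : E.V) (e : E.Edge) (l : List E.Edge) :
    E.endV w (e :: l) = E.endV (E.r e) l := rfl

@[simp] lemma endV_concat (w : E.V) (l : List E.Edge) (e : E.Edge) :
    E.endV w (l ++ [e]) = E.r e := by
  simp [endV, List.foldl_append]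

/-! ### Multiplication rules for path elements -/

@[simp] lemma pathElem_nil (u : E.V) : E.pathElem K u [] = E.vtx K u := by
  simp [pathElem]

lemma pathElem_cons (w : E.V) (e : E.Edge) (l : List E.Edge) :
    E.pathElem K w (e :: l) = E.vtx K w * (E.edg K e * E.pathElem K (E.r e) l) := by
  have h : E.edg K e * E.pathElem K (E.r e) l = E.edg K e * (l.map (E.edg K)).prod := by
    unfold pathElem
    rw [← mul_assoc, edg_mul_vtx, if_pos rfl]
  rw [h]
  unfold pathElem
  rw [List.map_cons, List.prod_cons]

lemma vtx_mul_pathElem (u w : E.V) (l : List E.Edge) :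
    E.vtx K u * E.pathElem K w l = if w = u then E.pathElem K w l else 0 := by
  unfold pathElem
  rw [← mul_assoc, vtx_mul_vtx]
  split_ifs with h
  · rw [h]
  · rw [zero_mul]

lemma edg_mul_pathElem (e : E.Edge) (w : E.V) (l : List E.Edge) :
    E.edg K e * E.pathElem K w l = if w = E.r e then E.pathElem K (E.s e) (e :: l) else 0 := by
  split_ifs with h
  · subst h
    rw [pathElem_cons, ← mul_assoc, vtx_mul_edg, if_pos rfl]
  · unfold pathElem
    rw [← mul_assoc, edg_mul_vtx, if_neg h, zero_mul]

lemma pathElem_mul_vtx (w : E.V) (l : List E.Edge) (u : E.V) :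
    E.pathElem K w l * E.vtx K u = if E.endV w l = u then E.pathElem K w l else 0 := by
  induction l generalizing w with
  | nil =>
      rw [pathElem_nil, vtx_mul_vtx, endV_nil]
      by_cases h : w = u
      · subst h; rfl
      · rw [if_neg h, if_neg fun hh => h hh.symm]
  | cons e t ih =>
      rw [pathElem_cons, mul_assoc, mul_assoc, ih, endV_cons]
      split_ifs with h
      · rfl
      · rw [mul_zero, mul_zero]

lemma pathElem_mul_edg (w : E.V) (l : List E.Edge) (e : E.Edge) :
    E.pathElem K w l * E.edg K e =
      if E.endV w l = E.s e then E.pathElem K w (l ++ [e]) else 0 := by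
  induction l generalizing w with
  | nil =>
      rw [pathElem_nil, endV_nil, List.nil_append]
      by_cases h : w = E.s e
      · subst h
        rw [if_pos rfl, vtx_mul_edg, if_pos rfl, pathElem_cons]
        rw [pathElem_nil, edg_mul_vtx, if_pos rfl, vtx_mul_edg, if_pos rfl]
      · rw [if_neg h, vtx_mul_edg, if_neg fun hh => h hh.symm]
  | cons e' t ih =>
      rw [pathElem_cons, mul_assoc, mul_assoc, ih, endV_cons, List.cons_append]
      split_ifs with h
      · exact (pathElem_cons (K := K) (E := E) w e' (t ++ [e])).symm
      · rw [mul_zero, mul_zero]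

@[simp] lemma pathElem_singleton (e : E.Edge) :
    E.pathElem K (E.s e) [e] = E.edg K e := by
  unfold pathElem
  simp [vtx_mul_edg]

/-! ### The path module: free module on formal paths plus a unit vector -/

/-- Basis for the path module: `none` is the "unit" vector, `some (w, l)` a formal path. -/
abbrev PBasis (E : DirGraph) : Type := Option (E.V × List E.Edge)

/-- The path module. -/
abbrev PMod (K : Type) [Field K] (E : DirGraph) : Type := PBasis E →₀ K

lemma lift_single {X M : Type} [AddCommMonoid M] [Module K M] (f : X → M) (a : X) (k : K) :
    Finsupp.lift M K X f (Finsupp.single a k) = k • f a := by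
  rw [Finsupp.lift_apply, Finsupp.sum_single_index (by simp)]

/-- Left action of a vertex. -/
noncomputable def actLV (K : Type) [Field K] (E : DirGraph) (u : E.V) :
    Module.End K (PMod K E) :=
  Finsupp.lift (PMod K E) K (PBasis E) fun b =>
    match b with
    | none => Finsupp.single (some (u, [])) 1
    | some (w, l) => if w = u then Finsupp.single (some (w, l)) 1 else 0

/-- Left action of an edge. -/
noncomputable def actLE (K : Type) [Field K] (E : DirGraph) (e : E.Edge) :
    Module.End K (PMod K E) :=
  Finsupp.lift (PMod K E) K (PBasis E) fun b =>
    match b with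
    | none => Finsupp.single (some (E.s e, [e])) 1
    | some (w, l) => if w = E.r e then Finsupp.single (some (E.s e, e :: l)) 1 else 0

/-- Right action of a vertex. -/
noncomputable def actRV (K : Type) [Field K] (E : DirGraph) (u : E.V) :
    Module.End K (PMod K E) :=
  Finsupp.lift (PMod K E) K (PBasis E) fun b =>
    match b with
    | none => Finsupp.single (some (u, [])) 1
    | some (w, l) => if E.endV w l = u then Finsupp.single (some (w, l)) 1 else 0

/-- Right action of an edge. -/
noncomputable def actRE (K : Type) [Field K] (E : DirGraph) (e : E.Edge) :
    Module.End K (PMod K E) :=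
  Finsupp.lift (PMod K E) K (PBasis E) fun b =>
    match b with
    | none => Finsupp.single (some (E.s e, [e])) 1
    | some (w, l) => if E.endV w l = E.s e then Finsupp.single (some (w, l ++ [e])) 1 else 0

@[simp] lemma actLV_single_none (u : E.V) (k : K) :
    actLV K E u (Finsupp.single none k) = Finsupp.single (some (u, [])) k := by
  rw [actLV, lift_single]; simp

@[simp] lemma actLV_single_some (u w : E.V) (l : List E.Edge) (k : K) :
    actLV K E u (Finsupp.single (some (w, l)) k) =
      if w = u then Finsupp.single (some (w, l)) k else 0 := by
  rw [actLV, lift_single]; split_ifs with h <;> simp [h]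

@[simp] lemma actLE_single_none (e : E.Edge) (k : K) :
    actLE K E e (Finsupp.single none k) = Finsupp.single (some (E.s e, [e])) k := by
  rw [actLE, lift_single]; simp

@[simp] lemma actLE_single_some (e : E.Edge) (w : E.V) (l : List E.Edge) (k : K) :
    actLE K E e (Finsupp.single (some (w, l)) k) =
      if w = E.r e then Finsupp.single (some (E.s e, e :: l)) k else 0 := by
  rw [actLE, lift_single]; split_ifs with h <;> simp [h]

@[simp] lemma actRV_single_none (u : E.V) (k : K) :
    actRV K E u (Finsupp.single none k) = Finsupp.single (some (u, [])) k := by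
  rw [actRV, lift_single]; simp

@[simp] lemma actRV_single_some (u w : E.V) (l : List E.Edge) (k : K) :
    actRV K E u (Finsupp.single (some (w, l)) k) =
      if E.endV w l = u then Finsupp.single (some (w, l)) k else 0 := by
  rw [actRV, lift_single]; split_ifs with h <;> simp [h]

@[simp] lemma actRE_single_none (e : E.Edge) (k : K) :
    actRE K E e (Finsupp.single none k) = Finsupp.single (some (E.s e, [e])) k := by
  rw [actRE, lift_single]; simp

@[simp] lemma actRE_single_some (e : E.Edge) (w : E.V) (l : List E.Edge) (k : K) :
    actRE K E e (Finsupp.single (some (w, l)) k) =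
      if E.endV w l = E.s e then Finsupp.single (some (w, l ++ [e])) k else 0 := by
  rw [actRE, lift_single]; split_ifs with h <;> simp [h]

/-! ### The left and right regular representations -/

/-- The left regular representation at the level of the free algebra. -/
noncomputable def preL (K : Type) [Field K] (E : DirGraph) :
    FreeAlgebra K E.Gen →ₐ[K] Module.End K (PMod K E) :=
  FreeAlgebra.lift K (Sum.elim (actLV K E) (actLE K E))

@[simp] lemma preL_inl (u : E.V) :
    preL K E (FreeAlgebra.ι K (Sum.inl u)) = actLV K E u := by
  simp [preL]

@[simp] lemma preL_inr (e : E.Edge) :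
    preL K E (FreeAlgebra.ι K (Sum.inr e)) = actLE K E e := by
  simp [preL]

lemma preL_rel {x y : FreeAlgebra K E.Gen} (h : E.PathRel K x y) :
    preL K E x = preL K E y := by
  cases h with
  | vv_eq u =>
      simp only [map_mul, preL_inl]
      refine Finsupp.lhom_ext fun b k => ?_
      rcases b with _ | ⟨w, l⟩ <;>
        simp only [Module.End.mul_apply, actLV_single_none, actLV_single_some] <;>
        split_ifs <;> simp_all
      all_goals intro h1
      all_goals simp_all
  | vv_ne u v h0 =>
      simp only [map_mul, preL_inl, map_zero]
      refine Finsupp.lhom_ext fun b k => ?_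
      rcases b with _ | ⟨w, l⟩ <;>
        simp only [Module.End.mul_apply, actLV_single_none, actLV_single_some,
          LinearMap.zero_apply] <;>
        split_ifs <;> simp_all
      all_goals intro h1
      all_goals simp_all
  | ve_eq e =>
      simp only [map_mul, preL_inl, preL_inr]
      refine Finsupp.lhom_ext fun b k => ?_
      rcases b with _ | ⟨w, l⟩ <;>
        simp only [Module.End.mul_apply, actLV_single_none, actLV_single_some,
          actLE_single_none, actLE_single_some] <;>
        split_ifs <;> simp_all
      all_goals intro h1
      all_goals simp_all
  | ve_ne u e h0 =>
      simp only [map_mul, preL_inl, preL_inr, map_zero]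
      refine Finsupp.lhom_ext fun b k => ?_
      rcases b with _ | ⟨w, l⟩ <;>
        simp only [Module.End.mul_apply, actLV_single_none, actLV_single_some,
          actLE_single_none, actLE_single_some, LinearMap.zero_apply] <;>
        split_ifs <;> simp_all
      all_goals intro h1
      all_goals simp_all
  | ev_eq e =>
      simp only [map_mul, preL_inl, preL_inr]
      refine Finsupp.lhom_ext fun b k => ?_
      rcases b with _ | ⟨w, l⟩ <;>
        simp only [Module.End.mul_apply, actLV_single_none, actLV_single_some,
          actLE_single_none, actLE_single_some] <;>
        split_ifs <;> simp_all
      all_goals intro h1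
      all_goals simp_all
  | ev_ne e u h0 =>
      simp only [map_mul, preL_inl, preL_inr, map_zero]
      refine Finsupp.lhom_ext fun b k => ?_
      rcases b with _ | ⟨w, l⟩ <;>
        simp only [Module.End.mul_apply, actLV_single_none, actLV_single_some,
          actLE_single_none, actLE_single_some, LinearMap.zero_apply] <;>
        split_ifs <;> simp_all
      all_goals intro h1
      all_goals simp_all

/-- The left regular representation of the path algebra. -/
noncomputable def repL (K : Type) [Field K] (E : DirGraph) :
    E.PA K →ₐ[K] Module.End K (PMod K E) :=
  RingQuot.liftAlgHom K ⟨preL K E, fun _ _ h => preL_rel h⟩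

@[simp] lemma repL_vtx (u : E.V) : repL K E (E.vtx K u) = actLV K E u := by
  rw [repL, vtx, RingQuot.liftAlgHom_mkAlgHom_apply, preL_inl]

@[simp] lemma repL_edg (e : E.Edge) : repL K E (E.edg K e) = actLE K E e := by
  rw [repL, edg, RingQuot.liftAlgHom_mkAlgHom_apply, preL_inr]

/-- The right regular representation at the level of the free algebra. -/
noncomputable def preR (K : Type) [Field K] (E : DirGraph) :
    FreeAlgebra K E.Gen →ₐ[K] (Module.End K (PMod K E))ᵐᵒᵖ :=
  FreeAlgebra.lift K
    (Sum.elim (fun u => MulOpposite.op (actRV K E u)) fun e => MulOpposite.op (actRE K E e))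

@[simp] lemma preR_inl (u : E.V) :
    preR K E (FreeAlgebra.ι K (Sum.inl u)) = MulOpposite.op (actRV K E u) := by
  simp [preR]

@[simp] lemma preR_inr (e : E.Edge) :
    preR K E (FreeAlgebra.ι K (Sum.inr e)) = MulOpposite.op (actRE K E e) := by
  simp [preR]

lemma preR_rel {x y : FreeAlgebra K E.Gen} (h : E.PathRel K x y) :
    preR K E x = preR K E y := by
  cases h with
  | vv_eq u =>
      simp only [map_mul, preR_inl, ← MulOpposite.op_mul]
      rw [MulOpposite.op_inj]
      refine Finsupp.lhom_ext fun b k => ?_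
      rcases b with _ | ⟨w, l⟩ <;>
        simp only [Module.End.mul_apply, actRV_single_none, actRV_single_some] <;>
        split_ifs <;> simp_all
      all_goals intro h1
      all_goals simp_all
  | vv_ne u v h0 =>
      simp only [map_mul, preR_inl, map_zero, ← MulOpposite.op_mul, ← MulOpposite.op_zero]
      rw [MulOpposite.op_inj]
      refine Finsupp.lhom_ext fun b k => ?_
      rcases b with _ | ⟨w, l⟩ <;>
        simp only [Module.End.mul_apply, actRV_single_none, actRV_single_some,
          LinearMap.zero_apply] <;>
        split_ifs <;> simp_all
      all_goals intro h1
      all_goals simp_all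
  | ve_eq e =>
      simp only [map_mul, preR_inl, preR_inr, ← MulOpposite.op_mul]
      rw [MulOpposite.op_inj]
      refine Finsupp.lhom_ext fun b k => ?_
      rcases b with _ | ⟨w, l⟩ <;>
        simp only [Module.End.mul_apply, actRV_single_none, actRV_single_some,
          actRE_single_none, actRE_single_some] <;>
        split_ifs <;> simp_all
      all_goals intro h1
      all_goals simp_all
  | ve_ne u e h0 =>
      simp only [map_mul, preR_inl, preR_inr, map_zero, ← MulOpposite.op_mul, ← MulOpposite.op_zero]
      rw [MulOpposite.op_inj]
      refine Finsupp.lhom_ext fun b k => ?_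
      rcases b with _ | ⟨w, l⟩ <;>
        simp only [Module.End.mul_apply, actRV_single_none, actRV_single_some,
          actRE_single_none, actRE_single_some, LinearMap.zero_apply] <;>
        split_ifs <;> simp_all
      all_goals intro h1
      all_goals simp_all
  | ev_eq e =>
      simp only [map_mul, preR_inl, preR_inr, ← MulOpposite.op_mul]
      rw [MulOpposite.op_inj]
      refine Finsupp.lhom_ext fun b k => ?_
      rcases b with _ | ⟨w, l⟩ <;>
        simp only [Module.End.mul_apply, actRV_single_none, actRV_single_some,
          actRE_single_none, actRE_single_some] <;>
        split_ifs <;> simp_all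
      all_goals intro h1
      all_goals simp_all
  | ev_ne e u h0 =>
      simp only [map_mul, preR_inl, preR_inr, map_zero, ← MulOpposite.op_mul, ← MulOpposite.op_zero]
      rw [MulOpposite.op_inj]
      refine Finsupp.lhom_ext fun b k => ?_
      rcases b with _ | ⟨w, l⟩ <;>
        simp only [Module.End.mul_apply, actRV_single_none, actRV_single_some,
          actRE_single_none, actRE_single_some, LinearMap.zero_apply] <;>
        split_ifs <;> simp_all
      all_goals intro h1
      all_goals simp_all

/-- The right regular representation of the path algebra. -/
noncomputable def repR (K : Type) [Field K] (E : DirGraph) :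
    E.PA K →ₐ[K] (Module.End K (PMod K E))ᵐᵒᵖ :=
  RingQuot.liftAlgHom K ⟨preR K E, fun _ _ h => preR_rel h⟩

@[simp] lemma repR_vtx (u : E.V) :
    repR K E (E.vtx K u) = MulOpposite.op (actRV K E u) := by
  rw [repR, vtx, RingQuot.liftAlgHom_mkAlgHom_apply, preR_inl]

@[simp] lemma repR_edg (e : E.Edge) :
    repR K E (E.edg K e) = MulOpposite.op (actRE K E e) := by
  rw [repR, edg, RingQuot.liftAlgHom_mkAlgHom_apply, preR_inr]

/-! ### The comparison map `ψ` and equivariance -/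

/-- Interpretation of basis vectors back in the path algebra. -/
noncomputable def psiF (K : Type) [Field K] (E : DirGraph) : PBasis E → E.PA K
  | none => 1
  | some (w, l) => E.pathElem K w l

/-- The comparison map from the path module to the path algebra. -/
noncomputable def psi (K : Type) [Field K] (E : DirGraph) : PMod K E →ₗ[K] E.PA K :=
  Finsupp.lift (E.PA K) K (PBasis E) (psiF K E)

@[simp] lemma psi_single_none (k : K) :
    psi K E (Finsupp.single none k) = k • (1 : E.PA K) := by
  rw [psi, lift_single]; rfl

@[simp] lemma psi_single_some (w : E.V) (l : List E.Edge) (k : K) :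
    psi K E (Finsupp.single (some (w, l)) k) = k • E.pathElem K w l := by
  rw [psi, lift_single]; rfl

lemma psi_repL (a : E.PA K) (m : PMod K E) :
    psi K E (repL K E a m) = a * psi K E m := by
  obtain ⟨x, rfl⟩ := RingQuot.mkAlgHom_surjective K (E.PathRel K) a
  induction x using FreeAlgebra.induction generalizing m with
  | grade0 r =>
      rw [AlgHom.commutes, AlgHom.commutes, Module.algebraMap_end_apply, map_smul,
        Algebra.smul_def]
  | grade1 g =>
      rcases g with u | e
      · rw [show (RingQuot.mkAlgHom K (E.PathRel K)) (FreeAlgebra.ι K (Sum.inl u)) =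
            E.vtx K u from rfl, repL_vtx]
        induction m using Finsupp.induction_linear with
        | zero => simp
        | add f g hf hg => simp [map_add, mul_add, hf, hg]
        | single b k =>
            rcases b with _ | ⟨w, l⟩
            · simp [mul_smul_comm]
            · rw [actLV_single_some]
              split_ifs with h <;>
                simp [mul_smul_comm, vtx_mul_pathElem, h]
      · rw [show (RingQuot.mkAlgHom K (E.PathRel K)) (FreeAlgebra.ι K (Sum.inr e)) =
            E.edg K e from rfl, repL_edg]
        induction m using Finsupp.induction_linear with
        | zero => simp
        | add f g hf hg => simp [map_add, mul_add, hf, hg]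
        | single b k =>
            rcases b with _ | ⟨w, l⟩
            · simp [mul_smul_comm]
            · rw [actLE_single_some]
              split_ifs with h <;>
                simp [mul_smul_comm, edg_mul_pathElem, h]
  | mul x y hx hy =>
      rw [map_mul, map_mul, Module.End.mul_apply, hx, hy, mul_assoc]
  | add x y hx hy =>
      rw [map_add, map_add, LinearMap.add_apply, map_add, hx, hy, add_mul]

lemma psi_repR (a : E.PA K) (m : PMod K E) :
    psi K E ((repR K E a).unop m) = psi K E m * a := by
  obtain ⟨x, rfl⟩ := RingQuot.mkAlgHom_surjective K (E.PathRel K) a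
  induction x using FreeAlgebra.induction generalizing m with
  | grade0 r =>
      rw [AlgHom.commutes, AlgHom.commutes, MulOpposite.algebraMap_apply, MulOpposite.unop_op,
        Module.algebraMap_end_apply, map_smul, ← Algebra.commutes, ← Algebra.smul_def]
  | grade1 g =>
      rcases g with u | e
      · rw [show (RingQuot.mkAlgHom K (E.PathRel K)) (FreeAlgebra.ι K (Sum.inl u)) =
            E.vtx K u from rfl, repR_vtx, MulOpposite.unop_op]
        induction m using Finsupp.induction_linear with
        | zero => simp
        | add f g hf hg => simp [map_add, add_mul, hf, hg]
        | single b k =>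
            rcases b with _ | ⟨w, l⟩
            · simp [smul_mul_assoc]
            · rw [actRV_single_some]
              split_ifs with h <;>
                simp [smul_mul_assoc, pathElem_mul_vtx, h]
      · rw [show (RingQuot.mkAlgHom K (E.PathRel K)) (FreeAlgebra.ι K (Sum.inr e)) =
            E.edg K e from rfl, repR_edg, MulOpposite.unop_op]
        induction m using Finsupp.induction_linear with
        | zero => simp
        | add f g hf hg => simp [map_add, add_mul, hf, hg]
        | single b k =>
            rcases b with _ | ⟨w, l⟩
            · simp [smul_mul_assoc]
            · rw [actRE_single_some]
              split_ifs with h <;>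
                simp [smul_mul_assoc, pathElem_mul_edg, h]
  | mul x y hx hy =>
      rw [map_mul, map_mul, MulOpposite.unop_mul, Module.End.mul_apply, hy, hx, mul_assoc]
  | add x y hx hy =>
      rw [map_add, map_add, MulOpposite.unop_add, LinearMap.add_apply, map_add, hx, hy, mul_add]

/-- The "unit" vector of the path module. -/
noncomputable def unitVec (K : Type) [Field K] (E : DirGraph) : PMod K E :=
  Finsupp.single none 1

lemma psi_repL_unit (a : E.PA K) : psi K E (repL K E a (unitVec K E)) = a := by
  rw [unitVec, psi_repL]; simp

lemma psi_repR_unit (a : E.PA K) : psi K E ((repR K E a).unop (unitVec K E)) = a := by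
  rw [unitVec, psi_repR]; simp

/-! ### Pointwise evaluation of the actions -/

lemma actLV_apply_none (v : E.V) (c : PMod K E) : (actLV K E v c) none = 0 := by
  induction c using Finsupp.induction_linear with
  | zero => simp
  | add f g hf hg => simp [hf, hg]
  | single b k =>
      rcases b with _ | ⟨x, t⟩
      · simp [Finsupp.single_apply]
      · rw [actLV_single_some]
        split_ifs <;> simp [Finsupp.single_apply]

lemma actLV_apply_some (v : E.V) (c : PMod K E) (w : E.V) (l : List E.Edge) (hw : w ≠ v) :
    (actLV K E v c) (some (w, l)) = 0 := by
  induction c using Finsupp.induction_linear with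
  | zero => simp
  | add f g hf hg => simp [hf, hg]
  | single b k =>
      rcases b with _ | ⟨x, t⟩
      · simp [Finsupp.single_apply, Ne.symm hw]
      · rw [actLV_single_some]
        split_ifs with h1
        · rw [Finsupp.single_apply, if_neg]
          intro hcon
          obtain ⟨h4, h5⟩ : x = w ∧ t = l := by simpa using hcon
          exact hw (h4 ▸ h1)
        · rfl

lemma actLE_apply_target (e : E.Edge) (c : PMod K E) (l : List E.Edge) :
    (actLE K E e c) (some (E.s e, e :: l)) =
      c (some (E.r e, l)) + (if l = [] then c none else 0) := by
  induction c using Finsupp.induction_linear with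
  | zero => simp
  | add f g hf hg =>
      rw [map_add, Finsupp.add_apply, hf, hg, Finsupp.add_apply, Finsupp.add_apply]
      split_ifs <;> ring
  | single b k =>
      rcases b with _ | ⟨x, t⟩
      · rw [actLE_single_none]
        by_cases h2 : l = [] <;> simp_all [Finsupp.single_apply]
      · rw [actLE_single_some]
        by_cases h1 : x = E.r e <;> by_cases h2 : t = l <;>
          simp_all [Finsupp.single_apply]

lemma actRV_apply_none (v : E.V) (c : PMod K E) : (actRV K E v c) none = 0 := by
  induction c using Finsupp.induction_linear with
  | zero => simp
  | add f g hf hg => simp [hf, hg]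
  | single b k =>
      rcases b with _ | ⟨x, t⟩
      · simp [Finsupp.single_apply]
      · rw [actRV_single_some]
        split_ifs <;> simp [Finsupp.single_apply]

lemma actRV_apply_some (v : E.V) (c : PMod K E) (w : E.V) (l : List E.Edge)
    (hw : E.endV w l ≠ v) : (actRV K E v c) (some (w, l)) = 0 := by
  induction c using Finsupp.induction_linear with
  | zero => simp
  | add f g hf hg => simp [hf, hg]
  | single b k =>
      rcases b with _ | ⟨x, t⟩
      · simp only [actRV_single_none, Finsupp.single_apply]
        split_ifs with h1 <;> simp_all
      · rw [actRV_single_some]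
        split_ifs with h1
        · rw [Finsupp.single_apply, if_neg]
          intro hcon
          obtain ⟨h4, h5⟩ : x = w ∧ t = l := by simpa using hcon
          subst h4; subst h5
          exact absurd h1 hw
        · rfl

lemma actRE_apply_target (e : E.Edge) (c : PMod K E) (w : E.V) (l : List E.Edge) :
    (actRE K E e c) (some (w, l ++ [e])) =
      (if E.endV w l = E.s e then c (some (w, l)) else 0) +
        (if w = E.s e ∧ l = [] then c none else 0) := by
  induction c using Finsupp.induction_linear with
  | zero => simp
  | add f g hf hg =>
      rw [map_add, Finsupp.add_apply, hf, hg, Finsupp.add_apply, Finsupp.add_apply]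
      split_ifs <;> ring
  | single b k =>
      rcases b with _ | ⟨x, t⟩
      · rw [actRE_single_none]
        rw [show ([e] : List E.Edge) = [] ++ [e] from rfl]
        by_cases h1 : w = E.s e <;> by_cases h2 : l = [] <;>
          simp_all [Finsupp.single_apply, List.append_left_inj] <;>
          (try (intro h4; exact absurd h4.symm h1))
      · rw [actRE_single_some]
        by_cases h1 : E.endV x t = E.s e <;> by_cases h2 : x = w <;> by_cases h3 : t = l <;>
          simp_all [Finsupp.single_apply, List.append_left_inj]

/-! ### Cancellation lemmas -/

lemma cancelL {a : E.PA K} (e : E.Edge) (hva : E.vtx K (E.r e) * a = a)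
    (hea : E.edg K e * a = 0) : a = 0 := by
  set c := repL K E a (unitVec K E) with hc
  have h1 : actLV K E (E.r e) c = c := by
    rw [hc]
    conv_rhs => rw [← hva]
    rw [map_mul, Module.End.mul_apply, repL_vtx]
  have h2 : actLE K E e c = 0 := by
    rw [hc, ← Module.End.mul_apply, ← repL_edg, ← map_mul, hea, map_zero]
    rfl
  have hnone : c none = 0 := by
    conv_lhs => rw [← h1]
    exact actLV_apply_none _ _
  have hc0 : c = 0 := by
    refine Finsupp.ext fun j => ?_
    show c j = 0
    rcases j with _ | ⟨w, l⟩
    · exact hnone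
    · by_cases hw : w = E.r e
      · subst hw
        have h3 := actLE_apply_target (K := K) (E := E) e c l
        rw [h2] at h3
        simp only [Finsupp.coe_zero, Pi.zero_apply, hnone, if_neg, ite_self] at h3
        simpa using h3.symm
      · conv_lhs => rw [← h1]
        exact actLV_apply_some _ _ _ _ hw
  have h4 := psi_repL_unit (K := K) (E := E) a
  rw [← hc, hc0, map_zero] at h4
  exact h4.symm

lemma cancelR {a : E.PA K} (e : E.Edge) (hva : a * E.vtx K (E.s e) = a)
    (hea : a * E.edg K e = 0) : a = 0 := by
  set c := (repR K E a).unop (unitVec K E) with hc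
  have h1 : actRV K E (E.s e) c = c := by
    rw [hc]
    conv_rhs => rw [← hva]
    rw [map_mul, MulOpposite.unop_mul, Module.End.mul_apply, repR_vtx, MulOpposite.unop_op]
  have h2 : actRE K E e c = 0 := by
    have h5 : (repR K E (a * E.edg K e)).unop (unitVec K E) = 0 := by
      rw [hea, map_zero]
      rfl
    rw [map_mul, MulOpposite.unop_mul, Module.End.mul_apply, repR_edg, MulOpposite.unop_op]
      at h5
    rw [hc]
    exact h5
  have hnone : c none = 0 := by
    conv_lhs => rw [← h1]
    exact actRV_apply_none _ _
  have hc0 : c = 0 := by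
    refine Finsupp.ext fun j => ?_
    show c j = 0
    rcases j with _ | ⟨w, l⟩
    · exact hnone
    · by_cases hend : E.endV w l = E.s e
      · have h3 := actRE_apply_target (K := K) (E := E) e c w l
        rw [h2, if_pos hend] at h3
        simp only [Finsupp.coe_zero, Pi.zero_apply, hnone, ite_self] at h3
        simpa using h3.symm
      · conv_lhs => rw [← h1]
        exact actRV_apply_some _ _ _ _ hend
  have h4 := psi_repR_unit (K := K) (E := E) a
  rw [← hc, hc0, map_zero] at h4
  exact h4.symm

/-! ### Central elements and connectivity -/

lemma vtx_mem_KE (u : E.V) : E.vtx K u ∈ E.KE K := by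
  rw [KE]
  exact NonUnitalAlgebra.subset_adjoin (R := K) (Set.mem_union_left _ ⟨u, rfl⟩)

lemma edg_mem_KE (e : E.Edge) : E.edg K e ∈ E.KE K := by
  rw [KE]
  exact NonUnitalAlgebra.subset_adjoin (R := K) (Set.mem_union_right _ ⟨e, rfl⟩)

lemma dirA {z : E.PA K} (hz : z ∈ E.relCenter K) (e : E.Edge)
    (h : z * E.vtx K (E.s e) = 0) : z * E.vtx K (E.r e) = 0 := by
  refine cancelL e ?_ ?_
  · calc E.vtx K (E.r e) * (z * E.vtx K (E.r e))
        = (E.vtx K (E.r e) * z) * E.vtx K (E.r e) := by rw [mul_assoc]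
      _ = (z * E.vtx K (E.r e)) * E.vtx K (E.r e) := by
          rw [hz.2 _ (vtx_mem_KE (E.r e))]
      _ = z * (E.vtx K (E.r e) * E.vtx K (E.r e)) := by rw [mul_assoc]
      _ = z * E.vtx K (E.r e) := by rw [vtx_mul_vtx, if_pos rfl]
  · calc E.edg K e * (z * E.vtx K (E.r e))
        = (E.edg K e * z) * E.vtx K (E.r e) := by rw [mul_assoc]
      _ = (z * E.edg K e) * E.vtx K (E.r e) := by rw [hz.2 _ (edg_mem_KE e)]
      _ = z * (E.edg K e * E.vtx K (E.r e)) := by rw [mul_assoc]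
      _ = z * E.edg K e := by rw [edg_mul_vtx, if_pos rfl]
      _ = z * (E.vtx K (E.s e) * E.edg K e) := by rw [vtx_mul_edg, if_pos rfl]
      _ = (z * E.vtx K (E.s e)) * E.edg K e := by rw [mul_assoc]
      _ = 0 := by rw [h, zero_mul]

lemma dirB {z : E.PA K} (hz : z ∈ E.relCenter K) (e : E.Edge)
    (h : z * E.vtx K (E.r e) = 0) : z * E.vtx K (E.s e) = 0 := by
  refine cancelR e ?_ ?_
  · calc (z * E.vtx K (E.s e)) * E.vtx K (E.s e)
        = z * (E.vtx K (E.s e) * E.vtx K (E.s e)) := by rw [mul_assoc]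
      _ = z * E.vtx K (E.s e) := by rw [vtx_mul_vtx, if_pos rfl]
  · calc (z * E.vtx K (E.s e)) * E.edg K e
        = z * (E.vtx K (E.s e) * E.edg K e) := by rw [mul_assoc]
      _ = z * E.edg K e := by rw [vtx_mul_edg, if_pos rfl]
      _ = z * (E.edg K e * E.vtx K (E.r e)) := by rw [edg_mul_vtx, if_pos rfl]
      _ = (z * E.edg K e) * E.vtx K (E.r e) := by rw [mul_assoc]
      _ = (E.edg K e * z) * E.vtx K (E.r e) := by rw [hz.2 _ (edg_mem_KE e)]
      _ = E.edg K e * (z * E.vtx K (E.r e)) := by rw [mul_assoc]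
      _ = 0 := by rw [h, mul_zero]

lemma step_zero_iff {z : E.PA K} (hz : z ∈ E.relCenter K) {u v : E.V} (h : E.Step u v) :
    z * E.vtx K u = 0 ↔ z * E.vtx K v = 0 := by
  rcases h with ⟨e, hs, hr⟩ | ⟨e, hs, hr⟩
  · subst hs; subst hr
    exact ⟨dirA hz e, dirB hz e⟩
  · subst hs; subst hr
    exact ⟨dirB hz e, dirA hz e⟩

lemma connected_zero_iff {z : E.PA K} (hz : z ∈ E.relCenter K) {u v : E.V}
    (h : E.Connected u v) : z * E.vtx K u = 0 ↔ z * E.vtx K v = 0 := by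
  induction h with
  | refl => exact Iff.rfl
  | tail hab hbc ih => exact ih.trans (step_zero_iff hz hbc)
end DirGraph
/-- If `z ∈ Z(KE)` is nonzero and `u ∼ v`, then `zu ≠ 0 ↔ zv ≠ 0`. -/
theorem stmt1 (K : Type) [Field K] (E : DirGraph) (z : E.PA K)
    (hz : z ∈ E.relCenter K) (hz0 : z ≠ 0) (u v : E.V) (huv : E.Connected u v) :
    z * E.vtx K u ≠ 0 ↔ z * E.vtx K v ≠ 0 := by
  exact not_congr (DirGraph.connected_zero_iff hz huv)
end

section
/- Let E be a directed graph, K a field, and z a nonzero central element of KE whose Peirce decomposition has the form z = ku + hv + Σ_{w ≠ u,v} z_w, where u ≠ v are vertices, k, h are nonzero scalars in K, and z_w ∈ wAw for the remaining vertices w. If u and v are connected, then k = h. -/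
open scoped Classical

namespace Stmt4Aux

variable (K : Type) [Field K] (E : DirGraph)

/-- Index type for the basis of the path (bi)module: `none` is the unit symbol,
`some (w, l)` is the word starting at `w` with list of edges `l`. -/
abbrev I := Option (E.V × List E.Edge)

/-- The module: formal `K`-linear combinations of basis symbols. -/
abbrev MM := (I E) →₀ K

/-- Terminal vertex of a word. -/
def endV (w : E.V) (l : List E.Edge) : E.V := l.foldl (fun _ e => E.r e) w

@[simp] lemma endV_nil (w : E.V) : endV E w [] = w := rfl
@[simp] lemma endV_cons (w : E.V) (e : E.Edge) (l : List E.Edge) :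
    endV E w (e :: l) = endV E (E.r e) l := rfl
@[simp] lemma endV_append (w : E.V) (l : List E.Edge) (e : E.Edge) :
    endV E w (l ++ [e]) = E.r e := by
  simp [endV, List.foldl_append]

/-- Left action of a generator on basis symbols (prepending). -/
noncomputable def stepL : E.Gen → I E → Option (I E)
  | .inl u, none => some (some (u, []))
  | .inl u, some (w, l) => if w = u then some (some (w, l)) else none
  | .inr e, none => some (some (E.s e, [e]))
  | .inr e, some (w, l) => if E.r e = w then some (some (E.s e, e :: l)) else none

/-- Right action of a generator on basis symbols (appending). -/
noncomputable def stepR : E.Gen → I E → Option (I E)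
  | .inl u, none => some (some (u, []))
  | .inl u, some (w, l) => if endV E w l = u then some (some (w, l)) else none
  | .inr e, none => some (some (E.s e, [e]))
  | .inr e, some (w, l) =>
      if endV E w l = E.s e then some (some (w, l ++ [e])) else none

/-- The linear endomorphism of `MM` induced by a partial map on basis symbols. -/
noncomputable def act (f : I E → Option (I E)) : MM K E →ₗ[K] MM K E :=
  Finsupp.lsum K fun i =>
    (f i).elim 0 fun j => LinearMap.toSpanSingleton K (MM K E) (Finsupp.single j 1)

@[simp] lemma act_single (f : I E → Option (I E)) (i : I E) (k : K) :
    act K E f (Finsupp.single i k) = (f i).elim 0 fun j => Finsupp.single j k := by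
  classical
  rw [act, Finsupp.lsum_single]
  cases f i with
  | none => simp
  | some j => simp [LinearMap.toSpanSingleton_apply, Finsupp.smul_single]

lemma act_mul (f g : I E → Option (I E)) :
    act K E f * act K E g = act K E (fun i => (g i).bind f) := by
  rw [Module.End.mul_eq_comp]
  apply Finsupp.lhom_ext
  intro i k
  simp only [LinearMap.comp_apply, act_single]
  cases g i with
  | none => simp
  | some j => simp [act_single]

lemma act_congr {f g : I E → Option (I E)} (h : ∀ i, f i = g i) :
    act K E f = act K E g := by
  have : f = g := funext h
  rw [this]

lemma act_none {f : I E → Option (I E)} (h : ∀ i, f i = none) :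
    act K E f = 0 := by
  apply Finsupp.lhom_ext
  intro i k
  simp [act_single, h i]

/-- The left regular-type representation. -/
noncomputable def Lhom : E.PA K →ₐ[K] Module.End K (MM K E) :=
  RingQuot.liftAlgHom K ⟨FreeAlgebra.lift K fun g => act K E (stepL E g), by
    intro x y hxy
    cases hxy with
    | vv_eq u =>
        simp only [map_mul, FreeAlgebra.lift_ι_apply, act_mul]
        apply act_congr
        rintro (_ | ⟨w, l⟩) <;> simp [stepL] <;> (try split_ifs) <;> (try simp_all) <;> (try aesop) <;> (try simp_all [stepL])
    | vv_ne u v huv =>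
        simp only [map_mul, map_zero, FreeAlgebra.lift_ι_apply, act_mul]
        apply act_none
        rintro (_ | ⟨w, l⟩) <;> simp [stepL] <;> (try split_ifs) <;> (try simp_all) <;> (try aesop) <;> (try simp_all [stepL])
    | ve_eq e =>
        simp only [map_mul, FreeAlgebra.lift_ι_apply, act_mul]
        apply act_congr
        rintro (_ | ⟨w, l⟩) <;> simp [stepL] <;> (try split_ifs) <;> (try simp_all) <;> (try aesop) <;> (try simp_all [stepL])
    | ve_ne u e hne =>
        simp only [map_mul, map_zero, FreeAlgebra.lift_ι_apply, act_mul]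
        apply act_none
        rintro (_ | ⟨w, l⟩) <;> simp [stepL] <;> (try split_ifs) <;> (try simp_all) <;> (try aesop) <;> (try simp_all [stepL])
    | ev_eq e =>
        simp only [map_mul, FreeAlgebra.lift_ι_apply, act_mul]
        apply act_congr
        rintro (_ | ⟨w, l⟩) <;> simp [stepL] <;> (try split_ifs) <;> (try simp_all) <;> (try aesop) <;> (try simp_all [stepL])
    | ev_ne e u hne =>
        simp only [map_mul, map_zero, FreeAlgebra.lift_ι_apply, act_mul]
        apply act_none
        rintro (_ | ⟨w, l⟩) <;> simp [stepL] <;> (try split_ifs) <;> (try simp_all) <;> (try aesop) <;> (try simp_all [stepL])⟩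

/-- The right regular-type representation (into the opposite algebra). -/
noncomputable def Rhom : E.PA K →ₐ[K] (Module.End K (MM K E))ᵐᵒᵖ :=
  RingQuot.liftAlgHom K ⟨FreeAlgebra.lift K fun g => MulOpposite.op (act K E (stepR E g)), by
    intro x y hxy
    cases hxy with
    | vv_eq u =>
        simp only [map_mul, FreeAlgebra.lift_ι_apply, ← MulOpposite.op_mul, act_mul]
        congr 1
        apply act_congr
        rintro (_ | ⟨w, l⟩) <;> simp [stepR] <;> (try split_ifs) <;> (try simp_all) <;> (try aesop) <;> (try simp_all [stepR])
    | vv_ne u v huv =>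
        simp only [map_mul, map_zero, FreeAlgebra.lift_ι_apply, ← MulOpposite.op_mul, act_mul]
        rw [show (0 : (Module.End K (MM K E))ᵐᵒᵖ) = MulOpposite.op 0 from rfl]
        congr 1
        apply act_none
        rintro (_ | ⟨w, l⟩) <;> simp [stepR] <;> (try split_ifs) <;> (try simp_all) <;> (try aesop) <;> (try simp_all [stepR])
    | ve_eq e =>
        simp only [map_mul, FreeAlgebra.lift_ι_apply, ← MulOpposite.op_mul, act_mul]
        congr 1
        apply act_congr
        rintro (_ | ⟨w, l⟩) <;> simp [stepR] <;> (try split_ifs) <;> (try simp_all) <;> (try aesop) <;> (try simp_all [stepR])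
    | ve_ne u e hne =>
        simp only [map_mul, map_zero, FreeAlgebra.lift_ι_apply, ← MulOpposite.op_mul, act_mul]
        rw [show (0 : (Module.End K (MM K E))ᵐᵒᵖ) = MulOpposite.op 0 from rfl]
        congr 1
        apply act_none
        rintro (_ | ⟨w, l⟩) <;> simp [stepR] <;> (try split_ifs) <;> (try simp_all) <;> (try aesop) <;> (try simp_all [stepR])
    | ev_eq e =>
        simp only [map_mul, FreeAlgebra.lift_ι_apply, ← MulOpposite.op_mul, act_mul]
        congr 1
        apply act_congr
        rintro (_ | ⟨w, l⟩) <;> simp [stepR] <;> (try split_ifs) <;> (try simp_all) <;> (try aesop) <;> (try simp_all [stepR])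
    | ev_ne e u hne =>
        simp only [map_mul, map_zero, FreeAlgebra.lift_ι_apply, ← MulOpposite.op_mul, act_mul]
        rw [show (0 : (Module.End K (MM K E))ᵐᵒᵖ) = MulOpposite.op 0 from rfl]
        congr 1
        apply act_none
        rintro (_ | ⟨w, l⟩) <;> simp [stepR] <;> (try split_ifs) <;> (try simp_all) <;> (try aesop) <;> (try simp_all [stepR])⟩

noncomputable def Lm (x : E.PA K) : Module.End K (MM K E) := Lhom K E x
noncomputable def Rm (x : E.PA K) : Module.End K (MM K E) := (Rhom K E x).unop

lemma Lm_mul (x y : E.PA K) : Lm K E (x * y) = Lm K E x * Lm K E y := by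
  simp [Lm, map_mul]

lemma Rm_mul (x y : E.PA K) : Rm K E (x * y) = Rm K E y * Rm K E x := by
  simp [Rm, map_mul]

lemma Lm_add (x y : E.PA K) : Lm K E (x + y) = Lm K E x + Lm K E y := by
  simp [Lm, map_add]

lemma Rm_add (x y : E.PA K) : Rm K E (x + y) = Rm K E x + Rm K E y := by
  simp [Rm, map_add]

lemma Lm_algebraMap (c : K) :
    Lm K E (algebraMap K (E.PA K) c) = algebraMap K (Module.End K (MM K E)) c := by
  simp [Lm, AlgHom.commutes]

lemma Rm_algebraMap (c : K) :
    Rm K E (algebraMap K (E.PA K) c) = algebraMap K (Module.End K (MM K E)) c := by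
  simp [Rm, AlgHom.commutes, MulOpposite.algebraMap_apply]

lemma Lm_vtx (u : E.V) : Lm K E (E.vtx K u) = act K E (stepL E (.inl u)) := by
  rw [Lm, DirGraph.vtx, Lhom, RingQuot.liftAlgHom_mkAlgHom_apply, FreeAlgebra.lift_ι_apply]

lemma Lm_edg (e : E.Edge) : Lm K E (E.edg K e) = act K E (stepL E (.inr e)) := by
  rw [Lm, DirGraph.edg, Lhom, RingQuot.liftAlgHom_mkAlgHom_apply, FreeAlgebra.lift_ι_apply]

lemma Rm_vtx (u : E.V) : Rm K E (E.vtx K u) = act K E (stepR E (.inl u)) := by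
  rw [Rm, DirGraph.vtx, Rhom, RingQuot.liftAlgHom_mkAlgHom_apply, FreeAlgebra.lift_ι_apply,
    MulOpposite.unop_op]

lemma Rm_edg (e : E.Edge) : Rm K E (E.edg K e) = act K E (stepR E (.inr e)) := by
  rw [Rm, DirGraph.edg, Rhom, RingQuot.liftAlgHom_mkAlgHom_apply, FreeAlgebra.lift_ι_apply,
    MulOpposite.unop_op]

/-- Induction principle for the path algebra. -/
lemma pa_induction {C : E.PA K → Prop}
    (halg : ∀ c : K, C (algebraMap K (E.PA K) c))
    (hvtx : ∀ u : E.V, C (E.vtx K u)) (hedg : ∀ e : E.Edge, C (E.edg K e))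
    (hmul : ∀ x y, C x → C y → C (x * y))
    (hadd : ∀ x y, C x → C y → C (x + y)) : ∀ x, C x := by
  intro x
  obtain ⟨a, rfl⟩ := RingQuot.mkAlgHom_surjective K (E.PathRel K) x
  induction a using FreeAlgebra.induction with
  | grade0 c => rw [AlgHom.commutes]; exact halg c
  | grade1 g =>
      cases g with
      | inl u => exact hvtx u
      | inr e => exact hedg e
  | mul a b ha hb => rw [map_mul]; exact hmul _ _ ha hb
  | add a b ha hb => rw [map_add]; exact hadd _ _ ha hb

lemma comm_gen (g g' : E.Gen) :
    act K E (stepL E g) * act K E (stepR E g')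
      = act K E (stepR E g') * act K E (stepL E g) := by
  rw [act_mul, act_mul]
  apply act_congr
  intro i
  cases g with
  | inl u =>
      cases g' with
      | inl u' =>
          rcases i with _ | ⟨w, l⟩ <;> simp [stepL, stepR] <;>
            (try split_ifs) <;> (try simp_all) <;> (try aesop) <;> (try simp_all [stepL, stepR])
      | inr e' =>
          rcases i with _ | ⟨w, l⟩ <;> simp [stepL, stepR] <;>
            (try split_ifs) <;> (try simp_all) <;> (try aesop) <;> (try simp_all [stepL, stepR])
  | inr e =>
      cases g' with
      | inl u' =>
          rcases i with _ | ⟨w, l⟩ <;> simp [stepL, stepR] <;>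
            (try split_ifs) <;> (try simp_all) <;> (try aesop) <;> (try simp_all [stepL, stepR])
      | inr e' =>
          rcases i with _ | ⟨w, l⟩ <;> simp [stepL, stepR] <;>
            (try split_ifs) <;> (try simp_all) <;> (try aesop) <;> (try simp_all [stepL, stepR])

lemma comm_L_Rgen (g' : E.Gen)
    (T : Module.End K (MM K E)) (hT : T = act K E (stepR E g')) :
    ∀ x, Lm K E x * T = T * Lm K E x := by
  subst hT
  apply pa_induction
  · intro c; rw [Lm_algebraMap]; rw [Algebra.commutes]
  · intro u; rw [Lm_vtx]; exact comm_gen K E _ _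
  · intro e; rw [Lm_edg]; exact comm_gen K E _ _
  · intro x y hx hy
    rw [Lm_mul, mul_assoc, hy, ← mul_assoc, hx, mul_assoc]
  · intro x y hx hy
    rw [Lm_add, add_mul, hx, hy, mul_add]

lemma comm (x y : E.PA K) : Lm K E x * Rm K E y = Rm K E y * Lm K E x := by
  induction y using pa_induction K E with
  | halg c => rw [Rm_algebraMap, Algebra.commutes]
  | hvtx u => rw [Rm_vtx]; exact comm_L_Rgen K E _ _ rfl x
  | hedg e => rw [Rm_edg]; exact comm_L_Rgen K E _ _ rfl x
  | hmul a b ha hb => rw [Rm_mul, ← mul_assoc, hb, mul_assoc, ha, ← mul_assoc]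
  | hadd a b ha hb => rw [Rm_add, add_mul, ← ha, ← hb, mul_add]

/-- The basis vector at the unit symbol. -/
noncomputable def bu : MM K E := Finsupp.single none 1

lemma LR_bu (x : E.PA K) : Lm K E x (bu K E) = Rm K E x (bu K E) := by
  induction x using pa_induction K E with
  | halg c => rw [Lm_algebraMap, Rm_algebraMap]
  | hvtx u => rw [Lm_vtx, Rm_vtx]; simp [bu, act_single, stepL, stepR]
  | hedg e => rw [Lm_edg, Rm_edg]; simp [bu, act_single, stepL, stepR]
  | hmul a b ha hb =>
      rw [Lm_mul, Rm_mul, Module.End.mul_apply, Module.End.mul_apply, hb,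
        ← Module.End.mul_apply, comm, Module.End.mul_apply, ha]
  | hadd a b ha hb =>
      rw [Lm_add, Rm_add, LinearMap.add_apply, LinearMap.add_apply, ha, hb]

lemma act_apply (f : I E → Option (I E)) (c : MM K E) (p : I E) :
    act K E f c p = c.sum fun i k => if f i = some p then k else 0 := by
  classical
  rw [act, Finsupp.lsum_apply, Finsupp.sum_apply]
  apply Finsupp.sum_congr
  intro i _
  cases hfi : f i with
  | none => simp [hfi]
  | some j =>
      simp only [hfi, Option.elim, LinearMap.toSpanSingleton_apply]
      rw [Finsupp.smul_single, smul_eq_mul, mul_one, Finsupp.single_apply]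
      simp [eq_comm]

lemma act_apply_two (f : I E → Option (I E)) (c : MM K E) (p i₁ i₂ : I E)
    (h12 : i₁ ≠ i₂) (hp : ∀ i, f i = some p ↔ (i = i₁ ∨ i = i₂)) :
    act K E f c p = c i₁ + c i₂ := by
  classical
  rw [act_apply]
  have : (c.sum fun i k => if f i = some p then k else 0)
      = c.sum fun i k => (if i = i₁ then k else 0) + (if i = i₂ then k else 0) := by
    apply Finsupp.sum_congr
    intro i _
    simp only [hp i]
    by_cases h1 : i = i₁ <;> by_cases h2 : i = i₂ <;> simp_all
  rw [this, Finsupp.sum_add]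
  congr 1
  · rw [Finsupp.sum_ite_eq' c i₁ fun _ k => k]
    split_ifs with hs
    · rfl
    · exact (Finsupp.notMem_support_iff.mp hs).symm
  · rw [Finsupp.sum_ite_eq' c i₂ fun _ k => k]
    split_ifs with hs
    · rfl
    · exact (Finsupp.notMem_support_iff.mp hs).symm

end Stmt4Aux
open Stmt4Aux in
/-- If `z ∈ Z(KE)` is nonzero with Peirce components `z_u = k·u` and
`z_v = h·v` at distinct vertices `u ≠ v`, `k, h ∈ K^×`, and `u ∼ v`, then `k = h`. -/
theorem stmt4 (K : Type) [Field K] (E : DirGraph) (z : E.PA K)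
    (hz : z ∈ E.relCenter K) (hz0 : z ≠ 0) (u v : E.V) (huv : u ≠ v)
    (k h : K) (hk : k ≠ 0) (hh : h ≠ 0)
    (hu : z * E.vtx K u = k • E.vtx K u) (hv : z * E.vtx K v = h • E.vtx K v)
    (hconn : E.Connected u v) : k = h := by
  classical
  set c : MM K E := Lm K E z (bu K E) with hc
  have heKE : ∀ e : E.Edge, E.edg K e ∈ E.KE K := fun e =>
    NonUnitalAlgebra.subset_adjoin K (Set.mem_union_right _ (Set.mem_range_self e))
  -- the coefficient of `z` at a vertex is constant along edges
  have edge_eq : ∀ e : E.Edge, c (some (E.s e, [])) = c (some (E.r e, [])) := by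
    intro e
    have hez : E.edg K e * z = z * E.edg K e := hz.2 _ (heKE e)
    have key : act K E (stepL E (.inr e)) c = act K E (stepR E (.inr e)) c := by
      have h1 : act K E (stepL E (.inr e)) c = Lm K E (E.edg K e * z) (bu K E) := by
        rw [Lm_mul, Module.End.mul_apply, ← hc, Lm_edg]
      have h2 : act K E (stepR E (.inr e)) c = Rm K E (z * E.edg K e) (bu K E) := by
        rw [Rm_mul, Module.End.mul_apply, ← LR_bu, ← hc, Rm_edg]
      rw [h1, h2, hez, LR_bu]
    have e1 : act K E (stepL E (.inr e)) c (some (E.s e, [e]))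
        = c none + c (some (E.r e, [])) := by
      apply act_apply_two
      · simp
      · rintro (_ | ⟨w, l⟩) <;> simp [stepL] <;> (try split_ifs) <;> (try simp_all) <;> (try aesop) <;> (try simp_all [stepL])
    have e2 : act K E (stepR E (.inr e)) c (some (E.s e, [e]))
        = c none + c (some (E.s e, [])) := by
      apply act_apply_two
      · simp
      · rintro (_ | ⟨w, l⟩) <;> simp [stepR] <;> (try split_ifs) <;> (try simp_all) <;> (try aesop) <;> (try simp_all [stepR])
    have := e1.symm.trans (by rw [key, e2])
    exact (add_left_cancel this).symm
  -- the hypothesis at a vertex pins down the coefficient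
  have vert : ∀ (w : E.V) (a : K), z * E.vtx K w = a • E.vtx K w →
      c none + c (some (w, [])) = a := by
    intro w a hw
    have h2 : act K E (stepR E (.inl w)) c = Lm K E (z * E.vtx K w) (bu K E) := by
      rw [LR_bu, Rm_mul, Module.End.mul_apply, ← LR_bu, ← hc, Rm_vtx]
    have h3 : Lm K E (z * E.vtx K w) (bu K E)
        = a • Finsupp.single (some (w, ([] : List E.Edge))) (1 : K) := by
      rw [hw, Lm, map_smul, ← Lm, Lm_vtx]
      simp [bu, act_single, stepL]
    have e2 : act K E (stepR E (.inl w)) c (some (w, []))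
        = c none + c (some (w, [])) := by
      apply act_apply_two
      · simp
      · rintro (_ | ⟨w', l'⟩) <;> simp [stepR] <;> (try split_ifs) <;> (try simp_all) <;> (try aesop) <;> (try simp_all [stepR])
    have := e2.symm.trans (by rw [h2, h3])
    rw [this]
    simp
  have hk' := vert u k hu
  have hh' := vert v h hv
  have step_eq : ∀ a b : E.V, E.Step a b → c (some (a, [])) = c (some (b, [])) := by
    rintro a b (⟨e, hs, hr⟩ | ⟨e, hs, hr⟩)
    · rw [← hs, ← hr]; exact edge_eq e
    · rw [← hs, ← hr]; exact (edge_eq e).symm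
  have conn_eq : ∀ a b : E.V, E.Connected a b → c (some (a, [])) = c (some (b, [])) := by
    intro a b hab
    induction hab with
    | refl => rfl
    | tail hab hbc ih => exact ih.trans (step_eq _ _ hbc)
  rw [← hk', ← hh', conn_eq u v hconn]
end
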